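/- In the Coxeter group W of affine type Ã_{n−1}, the word τ^{n−1} = (s_{n−1}s_{n−2}⋯s_1s_0)^{n−1} for κ is reduced; that is, ℓ(κ) = n(n−1). -/

import Mathlib

/-! Statement 5: in the Coxeter group of affine type `Ã_{n-1}`, the word
`τ^{n-1} = (s_{n-1}⋯s_1s_0)^{n-1}` for `κ` is reduced, i.e. `ℓ(κ) = n(n-1)`. -/


/-- The Coxeter matrix of affine type `Ã_{n-1}` on the index set `{0, 1, …, n-1}`:
`M i i = 1`, `M i j = 3` if `i − j ≡ ±1 (mod n)`, and `M i j = 2` otherwise. -/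
def affineA (n : ℕ) : CoxeterMatrix (Fin n) where
  M := Matrix.of fun i j : Fin n =>
    if i = j then 1
    else if ((i : ℕ) + 1) % n = (j : ℕ) ∨ ((j : ℕ) + 1) % n = (i : ℕ) then 3 else 2
  isSymm := by
    unfold Matrix.IsSymm
    ext i j
    simp only [Matrix.transpose_apply, Matrix.of_apply]
    rcases eq_or_ne i j with h | h
    · simp [h]
    · rw [if_neg h.symm, if_neg h]
      exact if_congr or_comm rfl rfl
  diagonal := by simp
  off_diagonal := by
    intro i j h
    simp only [Matrix.of_apply, if_neg h]
    split <;> omega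

variable {n : ℕ} {W : Type*} [Group W]

/-- The element `τ = s_{n-1}·s_{n-2}⋯s_1·s_0` of the affine Weyl group. -/
noncomputable def tauW (cs : CoxeterSystem (affineA n) W) : W :=
  cs.wordProd (List.finRange n).reverse

/-- The element `κ = τ^{n-1}`. -/
noncomputable def kappaW (cs : CoxeterSystem (affineA n) W) : W :=
  tauW cs ^ (n - 1)

namespace Stmt5Aux

open Function

lemma dvd_window {c : ℤ} (h : (n:ℤ) ∣ c) (hlo : -(n:ℤ) < c) (hhi : c < n) : c = 0 := by
  by_contra hc
  have h2 : (n:ℤ) ≤ |c| := Int.le_of_dvd (abs_pos.mpr hc) ((dvd_abs _ _).mpr h)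
  have := abs_lt.mpr ⟨hlo, hhi⟩
  omega

lemma ndvd {c : ℤ} (h0 : c ≠ 0) (hlo : -(n:ℤ) < c) (hhi : c < n) : ¬ (n:ℤ) ∣ c :=
  fun h => h0 (dvd_window h hlo hhi)

lemma dvd_bounds {c : ℤ} (h : (n:ℤ) ∣ c) (hlo : -(2*(n:ℤ)) < c) (hhi : c < n) :
    c = 0 ∨ c = -(n:ℤ) := by
  by_cases hc : -(n:ℤ) < c
  · exact Or.inl (dvd_window h hc hhi)
  · right
    have h2 : (n:ℤ) ∣ c + n := dvd_add h (dvd_refl _)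
    have := dvd_window h2 (by omega) (by omega)
    omega

/-- The action of the simple reflection `s_i` on `ℤ`. -/
noncomputable def g (n i : ℕ) (x : ℤ) : ℤ :=
  if (n:ℤ) ∣ x - i then x + 1 else if (n:ℤ) ∣ x - i - 1 then x - 1 else x

lemma g_up {i : ℕ} {x : ℤ} (h : (n:ℤ) ∣ x - i) : g n i x = x + 1 := if_pos h

lemma g_down {i : ℕ} {x : ℤ} (h1 : ¬ (n:ℤ) ∣ x - i) (h2 : (n:ℤ) ∣ x - i - 1) :
    g n i x = x - 1 := by rw [g, if_neg h1, if_pos h2]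

lemma g_fix {i : ℕ} {x : ℤ} (h1 : ¬ (n:ℤ) ∣ x - i) (h2 : ¬ (n:ℤ) ∣ x - i - 1) :
    g n i x = x := by rw [g, if_neg h1, if_neg h2]

lemma g_shift {i : ℕ} (x : ℤ) : g n i (x + n) = g n i x + n := by
  unfold g
  simp only [show x + (n:ℤ) - i - 1 = (x - i - 1) + n from by ring,
    show x + (n:ℤ) - i = (x - i) + n from by ring,
    show x - (i:ℤ) + n - 1 = (x - i - 1) + n from by ring, dvd_add_self_right]
  split_ifs <;> ring

lemma g_invol (hn : 3 ≤ n) (i : ℕ) : Involutive (g n i) := by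
  intro x
  by_cases h1 : (n:ℤ) ∣ x - i
  · rw [g_up h1]
    have c1 : ¬ (n:ℤ) ∣ x + 1 - i := by
      rw [show x + 1 - (i:ℤ) = (x - i) + 1 by ring, dvd_add_right h1]
      exact ndvd (by omega) (by omega) (by omega)
    have c2 : (n:ℤ) ∣ x + 1 - i - 1 := by rwa [show x + 1 - (i:ℤ) - 1 = x - i by ring]
    rw [g_down c1 c2]; ring
  · by_cases h2 : (n:ℤ) ∣ x - i - 1
    · rw [g_down h1 h2, g_up (by rwa [show x - 1 - (i:ℤ) = x - i - 1 by ring])]; ring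
    · rw [g_fix h1 h2, g_fix h1 h2]

/-- Commutation when `i` and `j` are not adjacent mod `n`. -/
lemma g_comm {i j : ℕ} (hd : ¬ (n:ℤ) ∣ (i:ℤ) - j) (h1 : ¬ (n:ℤ) ∣ (i:ℤ) + 1 - j)
    (h2 : ¬ (n:ℤ) ∣ (j:ℤ) + 1 - i) (x : ℤ) : g n i (g n j x) = g n j (g n i x) := by
  by_cases a1 : (n:ℤ) ∣ x - i
  · have b1 : ¬ (n:ℤ) ∣ x - j := by
      rw [show x - (j:ℤ) = (x - i) + (i - j) by ring, dvd_add_right a1]; exact hd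
    have b2 : ¬ (n:ℤ) ∣ x - j - 1 := by
      rw [show x - (j:ℤ) - 1 = (x - i) + -((j:ℤ) + 1 - i) by ring, dvd_add_right a1, dvd_neg]
      exact h2
    have b1' : ¬ (n:ℤ) ∣ x + 1 - j := by
      rw [show x + 1 - (j:ℤ) = (x - i) + ((i:ℤ) + 1 - j) by ring, dvd_add_right a1]; exact h1
    have b2' : ¬ (n:ℤ) ∣ x + 1 - j - 1 := by
      rw [show x + 1 - (j:ℤ) - 1 = (x - i) + ((i:ℤ) - j) by ring, dvd_add_right a1]; exact hd
    rw [g_fix b1 b2, g_up a1, g_fix b1' b2']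
  · by_cases a2 : (n:ℤ) ∣ x - i - 1
    · have b1 : ¬ (n:ℤ) ∣ x - j := by
        rw [show x - (j:ℤ) = (x - i - 1) + ((i:ℤ) + 1 - j) by ring, dvd_add_right a2]; exact h1
      have b2 : ¬ (n:ℤ) ∣ x - j - 1 := by
        rw [show x - (j:ℤ) - 1 = (x - i - 1) + ((i:ℤ) - j) by ring, dvd_add_right a2]; exact hd
      have b1' : ¬ (n:ℤ) ∣ x - 1 - j := by
        rw [show x - 1 - (j:ℤ) = (x - i - 1) + ((i:ℤ) - j) by ring, dvd_add_right a2]; exact hd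
      have b2' : ¬ (n:ℤ) ∣ x - 1 - j - 1 := by
        rw [show x - 1 - (j:ℤ) - 1 = (x - i - 1) + -((j:ℤ) + 1 - i) by ring, dvd_add_right a2,
          dvd_neg]
        exact h2
      rw [g_fix b1 b2, g_down a1 a2, g_fix b1' b2']
    · -- x not in class i or i+1
      by_cases b1 : (n:ℤ) ∣ x - j
      · have a1' : ¬ (n:ℤ) ∣ x + 1 - i := by
          rw [show x + 1 - (i:ℤ) = (x - j) + ((j:ℤ) + 1 - i) by ring, dvd_add_right b1]; exact h2
        have a2' : ¬ (n:ℤ) ∣ x + 1 - i - 1 := by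
          rw [show x + 1 - (i:ℤ) - 1 = (x - j) + -((i:ℤ) - j) by ring, dvd_add_right b1, dvd_neg]
          exact hd
        rw [g_up b1, g_fix a1' a2', g_fix a1 a2, g_up b1]
      · by_cases b2 : (n:ℤ) ∣ x - j - 1
        · have a1' : ¬ (n:ℤ) ∣ x - 1 - i := by
            rw [show x - 1 - (i:ℤ) = (x - j - 1) + -((i:ℤ) - j) by ring, dvd_add_right b2, dvd_neg]
            exact hd
          have a2' : ¬ (n:ℤ) ∣ x - 1 - i - 1 := by
            rw [show x - 1 - (i:ℤ) - 1 = (x - j - 1) + -((i:ℤ) + 1 - j) by ring, dvd_add_right b2,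
              dvd_neg]
            exact h1
          rw [g_down b1 b2, g_fix a1' a2', g_fix a1 a2, g_down b1 b2]
        · rw [g_fix b1 b2, g_fix a1 a2, g_fix b1 b2]


/-- Braid relation when `j ≡ i + 1 (mod n)`. -/
lemma g_braid {i j : ℕ} (hn : 3 ≤ n) (hE : (n:ℤ) ∣ (i:ℤ) + 1 - j) (x : ℤ) :
    g n i (g n j (g n i x)) = g n j (g n i (g n j x)) := by
  have not1 : ¬ (n:ℤ) ∣ (1:ℤ) := ndvd (by omega) (by omega) (by omega)
  have not2 : ¬ (n:ℤ) ∣ (2:ℤ) := ndvd (by omega) (by omega) (by omega)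
  have notm1 : ¬ (n:ℤ) ∣ (-1:ℤ) := ndvd (by omega) (by omega) (by omega)
  have notm2 : ¬ (n:ℤ) ∣ (-2:ℤ) := ndvd (by omega) (by omega) (by omega)
  by_cases a1 : (n:ℤ) ∣ x - i
  · -- x ≡ i
    have hxj : (n:ℤ) ∣ x + 1 - j := by
      rw [show x + 1 - (j:ℤ) = (x - i) + ((i:ℤ) + 1 - j) by ring]; exact dvd_add a1 hE
    have e1 : g n i x = x + 1 := g_up a1
    have e2 : g n j (x + 1) = x + 2 := by rw [g_up hxj]; ring
    have e3 : g n i (x + 2) = x + 2 := by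
      refine g_fix ?_ ?_
      · rw [show x + 2 - (i:ℤ) = (x - i) + 2 by ring, dvd_add_right a1]; exact not2
      · rw [show x + 2 - (i:ℤ) - 1 = (x - i) + 1 by ring, dvd_add_right a1]; exact not1
    have e4 : g n j x = x := by
      refine g_fix ?_ ?_
      · rw [show x - (j:ℤ) = ((x - i) + ((i:ℤ) + 1 - j)) + (-1) by ring,
          dvd_add_right (dvd_add a1 hE)]
        exact notm1
      · rw [show x - (j:ℤ) - 1 = ((x - i) + ((i:ℤ) + 1 - j)) + (-2) by ring,
          dvd_add_right (dvd_add a1 hE)]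
        exact notm2
    rw [e1, e2, e3, e4, e1, e2]
  · by_cases a2 : (n:ℤ) ∣ x - i - 1
    · -- x ≡ i + 1 ≡ j
      have hj : (n:ℤ) ∣ x - j := by
        rw [show x - (j:ℤ) = (x - i - 1) + ((i:ℤ) + 1 - j) by ring]; exact dvd_add a2 hE
      have e1 : g n i x = x - 1 := g_down a1 a2
      have e2 : g n j (x - 1) = x - 1 := by
        refine g_fix ?_ ?_
        · rw [show x - 1 - (j:ℤ) = (x - j) + (-1) by ring, dvd_add_right hj]; exact notm1
        · rw [show x - 1 - (j:ℤ) - 1 = (x - j) + (-2) by ring, dvd_add_right hj]; exact notm2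
      have e3 : g n i (x - 1) = x := by
        rw [g_up (by rwa [show x - 1 - (i:ℤ) = x - i - 1 by ring])]; ring
      have e4 : g n j x = x + 1 := g_up hj
      have e5 : g n i (x + 1) = x + 1 := by
        refine g_fix ?_ ?_
        · rw [show x + 1 - (i:ℤ) = (x - i - 1) + 2 by ring, dvd_add_right a2]; exact not2
        · rw [show x + 1 - (i:ℤ) - 1 = (x - i - 1) + 1 by ring, dvd_add_right a2]; exact not1
      have e6 : g n j (x + 1) = x := by
        refine Eq.trans (g_down ?_ ?_) (by ring)
        · rw [show x + 1 - (j:ℤ) = (x - j) + 1 by ring, dvd_add_right hj]; exact not1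
        · rwa [show x + 1 - (j:ℤ) - 1 = x - j by ring]
      rw [e1, e2, e3, e4, e5, e6]
    · by_cases c2 : (n:ℤ) ∣ x - i - 2
      · -- x ≡ i + 2 ≡ j + 1
        have hj1 : (n:ℤ) ∣ x - j - 1 := by
          rw [show x - (j:ℤ) - 1 = (x - i - 2) + ((i:ℤ) + 1 - j) by ring]; exact dvd_add c2 hE
        have e1 : g n i x = x := g_fix a1 a2
        have e2 : g n j x = x - 1 := by
          refine g_down ?_ hj1
          rw [show x - (j:ℤ) = (x - j - 1) + 1 by ring, dvd_add_right hj1]; exact not1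
        have e3 : g n i (x - 1) = x - 2 := by
          refine Eq.trans (g_down ?_ ?_) (by ring)
          · rw [show x - 1 - (i:ℤ) = (x - i - 2) + 1 by ring, dvd_add_right c2]; exact not1
          · rwa [show x - 1 - (i:ℤ) - 1 = x - i - 2 by ring]
        have e4 : g n j (x - 2) = x - 2 := by
          refine g_fix ?_ ?_
          · rw [show x - 2 - (j:ℤ) = (x - j - 1) + (-1) by ring, dvd_add_right hj1]; exact notm1
          · rw [show x - 2 - (j:ℤ) - 1 = (x - j - 1) + (-2) by ring, dvd_add_right hj1]
            exact notm2
        rw [e1, e2, e3, e4]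
      · -- x in no relevant class
        have e1 : g n i x = x := g_fix a1 a2
        have e2 : g n j x = x := by
          refine g_fix ?_ ?_
          · intro hc
            exact a2 (by rw [show x - (i:ℤ) - 1 = (x - j) - ((i:ℤ) + 1 - j) by ring]
                         exact dvd_sub hc hE)
          · intro hc
            exact c2 (by rw [show x - (i:ℤ) - 2 = (x - j - 1) - ((i:ℤ) + 1 - j) by ring]
                         exact dvd_sub hc hE)
        rw [e1, e2, e1, e2]

lemma adj_iff {i j : ℕ} (hi : i < n) (hj : j < n) :
    (i + 1) % n = j ↔ (n:ℤ) ∣ (i:ℤ) + 1 - j := by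
  constructor
  · intro h
    rcases Nat.lt_or_ge (i+1) n with hlt | hge
    · rw [Nat.mod_eq_of_lt hlt] at h
      rw [show (i:ℤ) + 1 - j = 0 by omega]
      exact dvd_zero _
    · have hin : i + 1 = n := by omega
      rw [hin, Nat.mod_self] at h
      rw [show (i:ℤ) + 1 - j = n by omega]
  · rintro ⟨k, hk⟩
    have hn0 : (0:ℤ) < n := by omega
    have hb1 : (n:ℤ) * k ≤ n * 1 := by rw [mul_one, ← hk]; omega
    have hb0 : (n:ℤ) * (-1) < n * k := by rw [← hk]; omega
    have hk1 : k ≤ 1 := Int.le_of_mul_le_mul_left hb1 hn0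
    have hk0 : (-1:ℤ) < k := Int.lt_of_mul_lt_mul_left hb0 (le_of_lt hn0)
    interval_cases k
    · have hji : j = i + 1 := by omega
      rw [Nat.mod_eq_of_lt (by omega)]
      omega
    · have hin : i + 1 = n := by omega
      rw [hin, Nat.mod_self]
      omega

noncomputable def fperm (n : ℕ) (hn : 3 ≤ n) (i : Fin n) : Equiv.Perm ℤ :=
  Function.Involutive.toPerm (g n (i:ℕ)) (g_invol hn (i:ℕ))

@[simp] lemma fperm_apply (hn : 3 ≤ n) (i : Fin n) (x : ℤ) :
    fperm n hn i x = g n (i:ℕ) x := rfl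

lemma fperm_sq (hn : 3 ≤ n) (i : Fin n) : fperm n hn i * fperm n hn i = 1 := by
  ext x
  simp only [Equiv.Perm.mul_apply, fperm_apply, Equiv.Perm.one_apply]
  exact g_invol hn (i:ℕ) x

lemma cube {G : Type*} [Group G] {a b : G} (ha : a*a = 1) (hb : b*b = 1)
    (h : a*b*a = b*a*b) : (a*b)^3 = 1 := by
  have e : (a*b)^3 = a * (b*a*b) * (a * b) := by
    rw [pow_succ, pow_succ, pow_one]; simp only [mul_assoc]
  rw [e, ← h]
  have e2 : a * (a*b*a) * (a * b) = (a*a) * (b * ((a*a) * b)) := by simp only [mul_assoc]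
  rw [e2, ha, one_mul, one_mul, hb]

lemma sq_of_comm {G : Type*} [Group G] {a b : G} (ha : a*a = 1) (hb : b*b = 1)
    (h : a*b = b*a) : (a*b)^2 = 1 := by
  have e : (a*b)^2 = a * (b*a) * b := by rw [pow_succ, pow_one]; simp only [mul_assoc]
  rw [e, ← h]
  have e2 : a * (a*b) * b = (a*a) * (b*b) := by simp only [mul_assoc]
  rw [e2, ha, hb, one_mul]

lemma liftable (hn : 3 ≤ n) : (affineA n).IsLiftable (fperm n hn) := by
  intro i j
  show _ ^ (if i = j then 1
    else if ((i : ℕ) + 1) % n = (j : ℕ) ∨ ((j : ℕ) + 1) % n = (i : ℕ) then 3 else 2) = 1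
  split_ifs with h1 h2
  · subst h1; rw [pow_one]; exact fperm_sq hn i
  · rcases h2 with h2 | h2
    · have hE : (n:ℤ) ∣ (i:ℤ) + 1 - j := (adj_iff i.isLt j.isLt).mp h2
      refine cube (fperm_sq hn i) (fperm_sq hn j) ?_
      ext x
      simp only [Equiv.Perm.mul_apply, fperm_apply]
      exact g_braid hn hE x
    · have hE : (n:ℤ) ∣ (j:ℤ) + 1 - i := (adj_iff j.isLt i.isLt).mp h2
      have h3 : (fperm n hn j * fperm n hn i)^3 = 1 := by
        refine cube (fperm_sq hn j) (fperm_sq hn i) ?_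
        ext x
        simp only [Equiv.Perm.mul_apply, fperm_apply]
        exact g_braid hn hE x
      have : (fperm n hn i * fperm n hn j)^3
          = fperm n hn i * (fperm n hn j * fperm n hn i)^3 * (fperm n hn i)⁻¹ := by
        rw [pow_succ, pow_succ, pow_one, pow_succ, pow_succ, pow_one]
        simp only [mul_assoc, mul_inv_cancel, mul_one]
      rw [this, h3, mul_one, mul_inv_cancel]
  · -- commute
    push_neg at h2
    obtain ⟨h2a, h2b⟩ := h2
    have hij : (i:ℕ) ≠ (j:ℕ) := fun hc => h1 (Fin.ext hc)
    have hd : ¬ (n:ℤ) ∣ (i:ℤ) - j := ndvd (by omega) (by have := i.isLt; have := j.isLt; omega)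
      (by have := i.isLt; have := j.isLt; omega)
    have hA : ¬ (n:ℤ) ∣ (i:ℤ) + 1 - j := fun hc => h2a ((adj_iff i.isLt j.isLt).mpr hc)
    have hB : ¬ (n:ℤ) ∣ (j:ℤ) + 1 - i := fun hc => h2b ((adj_iff j.isLt i.isLt).mpr hc)
    refine sq_of_comm (fperm_sq hn i) (fperm_sq hn j) ?_
    ext x
    simp only [Equiv.Perm.mul_apply, fperm_apply]
    exact g_comm hd hA hB x

/-- The homomorphism from `W` to permutations of `ℤ`. -/
noncomputable def F (hn : 3 ≤ n) (cs : CoxeterSystem (affineA n) W) : W →* Equiv.Perm ℤ :=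
  cs.lift ⟨fperm n hn, liftable hn⟩

lemma F_simple (hn : 3 ≤ n) (cs : CoxeterSystem (affineA n) W) (i : Fin n) :
    F hn cs (cs.simple i) = fperm n hn i :=
  cs.lift_apply_simple (liftable hn) i

lemma F_cons (hn : 3 ≤ n) (cs : CoxeterSystem (affineA n) W) (i : Fin n) (l : List (Fin n))
    (x : ℤ) : F hn cs (cs.wordProd (i :: l)) x = g n (i:ℕ) (F hn cs (cs.wordProd l) x) := by
  rw [cs.wordProd_cons, map_mul, Equiv.Perm.mul_apply, F_simple, fperm_apply]

lemma F_word_equiv (hn : 3 ≤ n) (cs : CoxeterSystem (affineA n) W) (l : List (Fin n)) (x : ℤ) :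
    F hn cs (cs.wordProd l) (x + n) = F hn cs (cs.wordProd l) x + n := by
  induction l generalizing x with
  | nil => simp [cs.wordProd_nil]
  | cons i l ih => rw [F_cons, F_cons, ih, g_shift]

lemma F_equiv (hn : 3 ≤ n) (cs : CoxeterSystem (affineA n) W) (w : W) (x : ℤ) :
    F hn cs w (x + n) = F hn cs w x + n := by
  obtain ⟨l, rfl⟩ := cs.wordProd_surjective w
  exact F_word_equiv hn cs l x

lemma F_equiv_mul (hn : 3 ≤ n) (cs : CoxeterSystem (affineA n) W) (w : W) (x : ℤ) (k : ℤ) :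
    F hn cs w (x + n * k) = F hn cs w x + n * k := by
  induction k using Int.induction_on with
  | zero => simp
  | succ m ih =>
      have := F_equiv hn cs w (x + n * m)
      rw [ih] at this
      rw [show x + (n:ℤ) * (m + 1) = x + n * m + n by ring, this]
      ring
  | pred m ih =>
      have := F_equiv hn cs w (x + n * (-m - 1))
      rw [show x + (n:ℤ) * (-m - 1) + n = x + n * (-m) by ring, ih] at this
      have e2 : (n:ℤ) * (-m - 1) = n * (-m) - n := by ring
      omega

lemma class_inj (hn : 3 ≤ n) (cs : CoxeterSystem (affineA n) W) (w : W) {x y : ℤ}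
    (h : (n:ℤ) ∣ F hn cs w x - F hn cs w y) : (n:ℤ) ∣ x - y := by
  obtain ⟨k, hk⟩ := h
  have h2 : F hn cs w x = F hn cs w (y + n * k) := by rw [F_equiv_mul]; omega
  have h3 : x = y + n * k := (F hn cs w).injective h2
  exact ⟨k, by omega⟩

/-- Sum of displacements over a window. -/
noncomputable def Dsum (n : ℕ) (p : Equiv.Perm ℤ) : ℕ :=
  ∑ v ∈ Finset.range n, ((p v - v).natAbs)

lemma Dsum_one : Dsum n 1 = 0 := by simp [Dsum]

lemma Dsum_step (hn : 3 ≤ n) (i : Fin n) (p : Equiv.Perm ℤ)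
    (hinj : ∀ x y : ℕ, x < n → y < n → (n:ℤ) ∣ p x - p y → x = y) :
    Dsum n (fperm n hn i * p) ≤ Dsum n p + 2 := by
  classical
  have key : ∀ v : ℕ, ((fperm n hn i * p) v - v).natAbs ≤
      (p v - v).natAbs + (((if (n:ℤ) ∣ p v - i then 1 else 0) : ℕ)
        + (if (n:ℤ) ∣ p v - i - 1 then 1 else 0)) := by
    intro v
    rw [Equiv.Perm.mul_apply, fperm_apply]
    have tri : (g n (i:ℕ) (p v) - v).natAbs ≤
        (g n (i:ℕ) (p v) - p v).natAbs + (p v - v).natAbs := by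
      have := Int.natAbs_add_le (g n (i:ℕ) (p v) - p v) (p v - v)
      rwa [show g n (i:ℕ) (p v) - p v + (p v - v) = g n (i:ℕ) (p v) - v by ring] at this
    refine le_trans tri ?_
    have hgb : (g n (i:ℕ) (p v) - p v).natAbs ≤
        ((if (n:ℤ) ∣ p v - i then 1 else 0) : ℕ) + (if (n:ℤ) ∣ p v - i - 1 then 1 else 0) := by
      by_cases h1 : (n:ℤ) ∣ p v - i
      · rw [g_up h1, if_pos h1]; simp
      · by_cases h2 : (n:ℤ) ∣ p v - i - 1
        · rw [g_down h1 h2, if_neg h1, if_pos h2]; simp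
        · rw [g_fix h1 h2, if_neg h1, if_neg h2]; simp
    omega
  calc Dsum n (fperm n hn i * p)
      ≤ ∑ v ∈ Finset.range n, ((p v - v).natAbs + (((if (n:ℤ) ∣ p v - i then 1 else 0) : ℕ)
        + (if (n:ℤ) ∣ p v - i - 1 then 1 else 0))) := Finset.sum_le_sum (fun v _ => key v)
    _ = Dsum n p + ((∑ v ∈ Finset.range n, ((if (n:ℤ) ∣ p v - i then 1 else 0) : ℕ))
        + ∑ v ∈ Finset.range n, ((if (n:ℤ) ∣ p v - i - 1 then 1 else 0) : ℕ)) := by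
        rw [Dsum, ← Finset.sum_add_distrib, ← Finset.sum_add_distrib]
    _ ≤ Dsum n p + (1 + 1) := by
        gcongr
        · rw [← Finset.card_filter]
          refine Finset.card_le_one.mpr (fun a ha b hb => ?_)
          simp only [Finset.mem_filter, Finset.mem_range] at ha hb
          exact hinj a b ha.1 hb.1 (by
            have := dvd_sub ha.2 hb.2
            rwa [show (p a - i) - ((p b : ℤ) - i) = p a - p b by ring] at this)
        · rw [← Finset.card_filter]
          refine Finset.card_le_one.mpr (fun a ha b hb => ?_)
          simp only [Finset.mem_filter, Finset.mem_range] at ha hb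
          exact hinj a b ha.1 hb.1 (by
            have := dvd_sub ha.2 hb.2
            rwa [show (p a - i - 1) - ((p b : ℤ) - i - 1) = p a - p b by ring] at this)

lemma Dsum_word (hn : 3 ≤ n) (cs : CoxeterSystem (affineA n) W) (l : List (Fin n)) :
    Dsum n (F hn cs (cs.wordProd l)) ≤ 2 * l.length := by
  induction l with
  | nil => simp [cs.wordProd_nil, Dsum_one]
  | cons i l ih =>
      rw [cs.wordProd_cons, map_mul, F_simple]
      have hinj : ∀ x y : ℕ, x < n → y < n →
          (n:ℤ) ∣ F hn cs (cs.wordProd l) x - F hn cs (cs.wordProd l) y → x = y := by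
        intro x y hx hy h
        have := class_inj hn cs _ h
        have := dvd_window this (by omega) (by omega)
        omega
      have := Dsum_step hn i (F hn cs (cs.wordProd l)) hinj
      simp only [List.length_cons]
      omega

lemma length_lower (hn : 3 ≤ n) (cs : CoxeterSystem (affineA n) W) (w : W) :
    Dsum n (F hn cs w) ≤ 2 * cs.length w := by
  obtain ⟨l, hl, rfl⟩ := cs.exists_reduced_word w
  rw [show cs.length (cs.wordProd l) = l.length from hl]
  exact Dsum_word hn cs l


lemma emod_eq {y c : ℤ} (h : (n:ℤ) ∣ y - c) (h0 : 0 ≤ c) (h1 : c < n) :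
    y % (n:ℤ) = c := by
  obtain ⟨t, ht⟩ := h
  have hy : y = c + (n:ℤ) * t := by omega
  rw [hy, Int.add_mul_emod_self_left, Int.emod_eq_of_lt h0 h1]

lemma Q_formula (hn : 3 ≤ n) (cs : CoxeterSystem (affineA n) W) (k : ℕ) : k ≤ n → ∀ x : ℤ,
    F hn cs (cs.wordProd (((List.finRange n).take k).reverse)) x =
      if x % (n:ℤ) = 0 then x + k
      else if x % (n:ℤ) = 1 ∧ k = n then x - 2
      else if x % (n:ℤ) ≤ (k:ℤ) then x - 1 else x := by
  induction k with
  | zero =>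
      intro _ x
      have h0 : 0 ≤ x % (n:ℤ) := Int.emod_nonneg x (by omega)
      simp only [List.take_zero, List.reverse_nil, cs.wordProd_nil, map_one,
        Equiv.Perm.one_apply, Nat.cast_zero]
      split_ifs <;> omega
  | succ k ih =>
      intro hk x
      have h0 : 0 ≤ x % (n:ℤ) := Int.emod_nonneg x (by omega)
      have h1 : x % (n:ℤ) < n := Int.emod_lt_of_pos x (by omega)
      have hd : (n:ℤ) ∣ x - x % n := by
        have := Int.emod_add_mul_ediv x n
        exact ⟨x / n, by omega⟩
      have hklt : k < n := by omega
      have hlist : ((List.finRange n).take (k+1)).reverse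
          = (⟨k, hklt⟩ : Fin n) :: ((List.finRange n).take k).reverse := by
        rw [List.take_succ]
        simp [List.getElem?_eq_getElem, hklt, List.getElem_finRange]
      rw [hlist, F_cons, ih (by omega) x]
      by_cases hr0 : x % (n:ℤ) = 0
      · rw [if_pos hr0, if_pos hr0]
        have hdx : (n:ℤ) ∣ x := by rw [hr0, sub_zero] at hd; exact hd
        rw [g_up (i := k) (by rwa [show x + (k:ℤ) - k = x by ring])]
        push_cast; ring
      · rw [if_neg hr0, if_neg hr0, if_neg (show ¬(x % (n:ℤ) = 1 ∧ k = n) by omega)]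
        by_cases hrk : x % (n:ℤ) ≤ (k:ℤ)
        · rw [if_pos hrk]
          by_cases hlast : x % (n:ℤ) = 1 ∧ k + 1 = n
          · rw [if_pos (by omega : x % (n:ℤ) = 1 ∧ k + 1 = n)]
            have hdx : (n:ℤ) ∣ x - 1 := by rw [← hlast.1]; exact hd
            refine Eq.trans (g_down ?_ ?_) (by ring)
            · rw [show x - 1 - (k:ℤ) = (x - 1) + (-(k:ℤ)) by ring, dvd_add_right hdx]
              exact ndvd (by omega) (by omega) (by omega)
            · rw [show x - 1 - (k:ℤ) - 1 = (x - 1) + (-(n:ℤ)) by omega]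
              exact dvd_add hdx (dvd_neg.mpr dvd_rfl)
          · rw [if_neg hlast, if_pos (show x % (n:ℤ) ≤ ((k+1:ℕ):ℤ) by push_cast; omega)]
            refine g_fix ?_ ?_
            · rw [show x - 1 - (k:ℤ) = (x - x % n) + (x % n - 1 - k) by ring, dvd_add_right hd]
              exact ndvd (by omega) (by omega) (by omega)
            · rw [show x - 1 - (k:ℤ) - 1 = (x - x % n) + (x % n - 2 - k) by ring,
                dvd_add_right hd]
              exact ndvd (by omega) (by omega) (by omega)
        · rw [if_neg hrk]
          by_cases hrk1 : x % (n:ℤ) ≤ (k:ℤ) + 1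
          · rw [if_neg (show ¬(x % (n:ℤ) = 1 ∧ k + 1 = n) by omega),
              if_pos (show x % (n:ℤ) ≤ ((k+1:ℕ):ℤ) by push_cast; omega)]
            refine g_down ?_ ?_
            · rw [show x - (k:ℤ) = (x - x % n) + (x % n - k) by ring, dvd_add_right hd]
              exact ndvd (by omega) (by omega) (by omega)
            · rw [show x - (k:ℤ) - 1 = x - x % n by omega]
              exact hd
          · rw [if_neg (show ¬(x % (n:ℤ) = 1 ∧ k + 1 = n) by omega),
              if_neg (show ¬ x % (n:ℤ) ≤ ((k+1:ℕ):ℤ) by push_cast; omega)]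
            refine g_fix ?_ ?_
            · rw [show x - (k:ℤ) = (x - x % n) + (x % n - k) by ring, dvd_add_right hd]
              exact ndvd (by omega) (by omega) (by omega)
            · rw [show x - (k:ℤ) - 1 = (x - x % n) + (x % n - k - 1) by ring, dvd_add_right hd]
              exact ndvd (by omega) (by omega) (by omega)

lemma tau_apply (hn : 3 ≤ n) (cs : CoxeterSystem (affineA n) W) (x : ℤ) :
    F hn cs (tauW cs) x =
      if x % (n:ℤ) = 0 then x + n else if x % (n:ℤ) = 1 then x - 2 else x - 1 := by
  have h0 : 0 ≤ x % (n:ℤ) := Int.emod_nonneg x (by omega)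
  have h1 : x % (n:ℤ) < n := Int.emod_lt_of_pos x (by omega)
  have hq := Q_formula hn cs n le_rfl x
  rw [show ((List.finRange n).take n) = List.finRange n from by simp] at hq
  rw [tauW, hq]
  split_ifs <;> omega

lemma pow_apply (hn : 3 ≤ n) (cs : CoxeterSystem (affineA n) W) (m : ℕ) : m ≤ n - 1 → ∀ x : ℤ,
    F hn cs (tauW cs ^ m) x =
      if x % (n:ℤ) = 0 then x + (m:ℤ) * n
      else if (m:ℤ) + 1 ≤ x % (n:ℤ) then x - m else x - m - 1 := by
  induction m with
  | zero =>
      intro _ x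
      have h0 : 0 ≤ x % (n:ℤ) := Int.emod_nonneg x (by omega)
      simp only [pow_zero, map_one, Equiv.Perm.one_apply, Nat.cast_zero]
      split_ifs <;> omega
  | succ m ih =>
      intro hm x
      have h0 : 0 ≤ x % (n:ℤ) := Int.emod_nonneg x (by omega)
      have h1 : x % (n:ℤ) < n := Int.emod_lt_of_pos x (by omega)
      have hd : (n:ℤ) ∣ x - x % n := by
        have := Int.emod_add_mul_ediv x n
        exact ⟨x / n, by omega⟩
      rw [pow_succ', map_mul, Equiv.Perm.mul_apply, ih (by omega) x]
      by_cases hr0 : x % (n:ℤ) = 0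
      · rw [if_pos hr0, if_pos hr0, tau_apply hn cs]
        have hdx : (n:ℤ) ∣ x := by rw [hr0, sub_zero] at hd; exact hd
        have hz : (x + (m:ℤ) * n) % (n:ℤ) = 0 := emod_eq
          (by rw [sub_zero]; exact dvd_add hdx (dvd_mul_left _ _)) le_rfl (by omega)
        rw [if_pos hz]
        push_cast; ring
      · rw [if_neg hr0, if_neg hr0]
        by_cases hm1 : (m:ℤ) + 1 ≤ x % (n:ℤ)
        · rw [if_pos hm1, tau_apply hn cs]
          have hy : (x - (m:ℤ)) % (n:ℤ) = x % n - m := emod_eq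
            (by rw [show x - (m:ℤ) - (x % n - m) = x - x % n by ring]; exact hd)
            (by omega) (by omega)
          split_ifs <;> omega
        · rw [if_neg hm1, tau_apply hn cs]
          have hy : (x - (m:ℤ) - 1) % (n:ℤ) = x % n - m - 1 + n := emod_eq
            (by rw [show x - (m:ℤ) - 1 - (x % n - m - 1 + n) = (x - x % n) + (-(n:ℤ)) by ring]
                exact dvd_add hd (dvd_neg.mpr dvd_rfl))
            (by omega) (by omega)
          split_ifs <;> omega

lemma Dsum_kappa (hn : 3 ≤ n) (cs : CoxeterSystem (affineA n) W) :
    Dsum n (F hn cs (kappaW cs)) = 2 * (n * (n - 1)) := by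
  rw [Dsum]
  have hterm : ∀ v ∈ Finset.range n,
      ((F hn cs (kappaW cs) v - v).natAbs) = if v = 0 then (n-1) * n else n := by
    intro v hv
    rw [Finset.mem_range] at hv
    rw [kappaW, pow_apply hn cs (n-1) le_rfl v]
    have hm : ((v:ℤ)) % (n:ℤ) = v := Int.emod_eq_of_lt (by omega) (by omega)
    by_cases hv0 : v = 0
    · subst hv0
      rw [if_pos (by omega : ((0:ℕ):ℤ) % (n:ℤ) = 0), if_pos rfl]
      have : ((0:ℕ):ℤ) + ((n-1:ℕ):ℤ) * n - ((0:ℕ):ℤ) = (((n-1) * n : ℕ) : ℤ) := by push_cast; ring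
      rw [this, Int.natAbs_natCast]
    · rw [if_neg (by omega : ¬ ((v:ℤ)) % (n:ℤ) = 0),
        if_neg (by omega : ¬ (((n-1:ℕ):ℤ) + 1 ≤ ((v:ℤ)) % (n:ℤ))), if_neg hv0]
      have : (v:ℤ) - ((n-1:ℕ):ℤ) - 1 - (v:ℤ) = -((n:ℕ):ℤ) := by omega
      rw [this, Int.natAbs_neg, Int.natAbs_natCast]
  rw [Finset.sum_congr rfl hterm]
  have h0mem : (0:ℕ) ∈ Finset.range n := Finset.mem_range.mpr (by omega)
  rw [← Finset.add_sum_erase _ _ h0mem, if_pos rfl]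
  have : ∀ v ∈ (Finset.range n).erase 0, (if v = 0 then (n-1) * n else n) = n := by
    intro v hv
    rw [Finset.mem_erase] at hv
    rw [if_neg hv.1]
  rw [Finset.sum_congr rfl this, Finset.sum_const, Finset.card_erase_of_mem h0mem,
    Finset.card_range, smul_eq_mul]
  ring

lemma tau_len (cs : CoxeterSystem (affineA n) W) : cs.length (tauW cs) ≤ n := by
  have := cs.length_wordProd_le (List.finRange n).reverse
  simpa [tauW] using this

lemma pow_len (cs : CoxeterSystem (affineA n) W) (m : ℕ) :
    cs.length (tauW cs ^ m) ≤ m * n := by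
  induction m with
  | zero => simp
  | succ m ih =>
      rw [pow_succ]
      calc cs.length (tauW cs ^ m * tauW cs) ≤ cs.length (tauW cs ^ m) + cs.length (tauW cs) :=
            cs.length_mul_le _ _
        _ ≤ m * n + n := Nat.add_le_add ih (tau_len cs)
        _ = (m+1) * n := by ring


end Stmt5Aux

open Stmt5Aux in
/-- `ℓ(κ) = n(n-1)`. -/
theorem stmt5 (hn : 3 ≤ n) (cs : CoxeterSystem (affineA n) W) :
    cs.length (kappaW cs) = n * (n - 1) := by
  have hlow := length_lower hn cs (kappaW cs)
  rw [Dsum_kappa hn cs] at hlow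
  have hup : cs.length (kappaW cs) ≤ n * (n - 1) := by
    rw [kappaW]
    calc cs.length (tauW cs ^ (n-1)) ≤ (n-1) * n := pow_len cs (n-1)
      _ = n * (n-1) := Nat.mul_comm _ _
  omega
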